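/- For i.i.d. positive random variables w_1, ..., w_K with finite mean μ = E[w], the sequence of importance-weighted bounds L_K = E[log((1/K)∑_{k=1}^K w_k)] is monotonically non-decreasing in K, i.e., L_{K+1} ≥ L_K for all K ≥ 1. -/

import Mathlib

open MeasureTheory ProbabilityTheory Filter Set
open scoped ENNReal BigOperators Topology

/-- Sums of independent, identically distributed pairs are identically distributed. -/
lemma identDistrib_add_aux {Ω : Type*} [MeasurableSpace Ω] {P : Measure Ω}
    [IsProbabilityMeasure P] {X Y X' Y' : Ω → ℝ}
    (hX : Measurable X) (hY : Measurable Y) (hX' : Measurable X') (hY' : Measurable Y')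
    (hXY : IndepFun X Y P) (hXY' : IndepFun X' Y' P)
    (h1 : IdentDistrib X X' P P) (h2 : IdentDistrib Y Y' P P) :
    IdentDistrib (fun ω => X ω + Y ω) (fun ω => X' ω + Y' ω) P P := by
  refine ⟨(hX.add hY).aemeasurable, (hX'.add hY').aemeasurable, ?_⟩
  have e1 := (indepFun_iff_map_prod_eq_prod_map_map hX.aemeasurable hY.aemeasurable).mp hXY
  have e2 := (indepFun_iff_map_prod_eq_prod_map_map hX'.aemeasurable hY'.aemeasurable).mp hXY'
  have r1 : (fun ω => X ω + Y ω)
      = (fun p : ℝ × ℝ => p.1 + p.2) ∘ (fun ω => (X ω, Y ω)) := rfl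
  have r2 : (fun ω => X' ω + Y' ω)
      = (fun p : ℝ × ℝ => p.1 + p.2) ∘ (fun ω => (X' ω, Y' ω)) := rfl
  rw [r1, r2, ← Measure.map_map measurable_add (hX.prodMk hY),
    ← Measure.map_map measurable_add (hX'.prodMk hY'), e1, e2, h1.map_eq, h2.map_eq]

/-- For i.i.d. random variables, the sum over any finset of cardinality `n` is identically
distributed to the sum over `range n`. -/
lemma sum_identDistrib_aux {Ω : Type*} [MeasurableSpace Ω] {P : Measure Ω}
    [IsProbabilityMeasure P] (w : ℕ → Ω → ℝ)
    (hmeas : ∀ i, Measurable (w i))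
    (hindep : iIndepFun w P)
    (hident : ∀ i, Measure.map (w i) P = Measure.map (w 0) P) :
    ∀ (n : ℕ) (s : Finset ℕ), s.card = n →
      IdentDistrib (fun ω => ∑ k ∈ s, w k ω) (fun ω => ∑ k ∈ Finset.range n, w k ω) P P := by
  intro n
  induction n with
  | zero =>
    intro s hs
    rw [Finset.card_eq_zero] at hs
    subst hs
    simp only [Finset.sum_empty, Finset.range_zero]
    exact IdentDistrib.refl aemeasurable_const
  | succ n ih =>
    intro s hs
    have hsne : s.Nonempty := Finset.card_pos.mp (by omega)
    obtain ⟨j, hj⟩ := hsne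
    have hcard : (s.erase j).card = n := by
      rw [Finset.card_erase_of_mem hj, hs]
      omega
    have hIH := ih (s.erase j) hcard
    -- independence of the partial sum and the extra term
    have hind1 : IndepFun (fun ω => ∑ k ∈ s.erase j, w k ω) (w j) P := by
      have := hindep.indepFun_finsetSum_of_notMem hmeas (Finset.notMem_erase j s)
      have he : (∑ k ∈ s.erase j, w k) = fun ω => ∑ k ∈ s.erase j, w k ω := by
        funext ω; simp [Finset.sum_apply]
      rwa [he] at this
    have hind2 : IndepFun (fun ω => ∑ k ∈ Finset.range n, w k ω) (w n) P := by
      have := hindep.indepFun_finsetSum_of_notMem hmeas (Finset.notMem_range_self (n := n))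
      have he : (∑ k ∈ Finset.range n, w k) = fun ω => ∑ k ∈ Finset.range n, w k ω := by
        funext ω; simp [Finset.sum_apply]
      rwa [he] at this
    have hid2 : IdentDistrib (w j) (w n) P P :=
      ⟨(hmeas j).aemeasurable, (hmeas n).aemeasurable, by rw [hident j, hident n]⟩
    have hmeas1 : Measurable (fun ω => ∑ k ∈ s.erase j, w k ω) :=
      Finset.measurable_sum _ fun k _ => hmeas k
    have hmeas2 : Measurable (fun ω => ∑ k ∈ Finset.range n, w k ω) :=
      Finset.measurable_sum _ fun k _ => hmeas k
    have hadd := identDistrib_add_aux hmeas1 (hmeas j) hmeas2 (hmeas n)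
      hind1 hind2 hIH hid2
    have e1 : (fun ω => (∑ k ∈ s.erase j, w k ω) + w j ω) = (fun ω => ∑ k ∈ s, w k ω) := by
      funext ω; rw [Finset.sum_erase_add s _ hj]
    have e2 : (fun ω => (∑ k ∈ Finset.range n, w k ω) + w n ω)
        = (fun ω => ∑ k ∈ Finset.range (n + 1), w k ω) := by
      funext ω; rw [Finset.sum_range_succ]
    rwa [e1, e2] at hadd

/-- For i.i.d. positive integrable random variables `w 0, w 1, ...`, the importance-weighted
bounds `L K = E[log((1/K) ∑_{k<K} w k)]` are monotonically non-decreasing in `K`: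
`L (K+1) ≥ L K` for all `K ≥ 1`. -/
theorem iwae_bound_monotone
    {Ω : Type*} [MeasurableSpace Ω] (P : Measure Ω) [IsProbabilityMeasure P]
    (w : ℕ → Ω → ℝ)
    (hmeas : ∀ i, Measurable (w i))
    (hindep : iIndepFun w P)
    (hident : ∀ i, Measure.map (w i) P = Measure.map (w 0) P)
    (hpos : ∀ i, ∀ᵐ ω ∂P, 0 < w i ω)
    (hint : ∀ i, Integrable (w i) P)
    (hlogint : ∀ K : ℕ, 1 ≤ K →
      Integrable (fun ω => Real.log ((∑ k ∈ Finset.range K, w k ω) / K)) P)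
    (K : ℕ) (hK : 1 ≤ K) :
    ∫ ω, Real.log ((∑ k ∈ Finset.range K, w k ω) / K) ∂P ≤
      ∫ ω, Real.log ((∑ k ∈ Finset.range (K + 1), w k ω) / (K + 1)) ∂P := by
  classical
  set t := Finset.range (K + 1) with ht
  -- leave-one-out log terms
  set g : ℕ → Ω → ℝ := fun j ω => Real.log ((∑ k ∈ t.erase j, w k ω) / K) with hg
  have hu : Measurable (fun x : ℝ => Real.log (x / K)) :=
    Real.measurable_log.comp (measurable_id.div_const _)
  -- each leave-one-out term is identically distributed to log(S_K / K)
  have hgid : ∀ j ∈ t, IdentDistrib (g j)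
      (fun ω => Real.log ((∑ k ∈ Finset.range K, w k ω) / K)) P P := by
    intro j hjt
    have hcard : (t.erase j).card = K := by
      rw [Finset.card_erase_of_mem hjt, ht, Finset.card_range]
      omega
    have hsum := sum_identDistrib_aux w hmeas hindep hident K (t.erase j) hcard
    have := hsum.comp hu
    exact this
  have hlogK := hlogint K hK
  have hg_int : ∀ j ∈ t, Integrable (g j) P := fun j hjt =>
    ((hgid j hjt).integrable_iff).mpr hlogK
  have hg_eq : ∀ j ∈ t, ∫ ω, g j ω ∂P
      = ∫ ω, Real.log ((∑ k ∈ Finset.range K, w k ω) / K) ∂P := fun j hjt =>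
    (hgid j hjt).integral_eq
  have hKpos : (0 : ℝ) < K := by exact_mod_cast hK
  have hK1pos : (0 : ℝ) < (K : ℝ) + 1 := by positivity
  -- pointwise Jensen inequality
  have hae : ∀ᵐ ω ∂P, ∑ j ∈ t, ((K : ℝ) + 1)⁻¹ * g j ω
      ≤ Real.log ((∑ k ∈ Finset.range (K + 1), w k ω) / (K + 1)) := by
    filter_upwards [ae_all_iff.mpr hpos] with ω hω
    have hxpos : ∀ j ∈ t, (∑ k ∈ t.erase j, w k ω) / K ∈ Set.Ioi (0 : ℝ) := by
      intro j hjt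
      have hne : (t.erase j).Nonempty := by
        rw [← Finset.card_pos, Finset.card_erase_of_mem hjt, ht, Finset.card_range]; omega
      have hsumpos : 0 < ∑ k ∈ t.erase j, w k ω :=
        Finset.sum_pos (fun k _ => hω k) hne
      exact Set.mem_Ioi.mpr (by positivity)
    have hw : ∀ j ∈ t, (0 : ℝ) ≤ ((K : ℝ) + 1)⁻¹ := fun _ _ => by positivity
    have hw1 : ∑ _j ∈ t, ((K : ℝ) + 1)⁻¹ = 1 := by
      rw [Finset.sum_const, ht, Finset.card_range, nsmul_eq_mul]
      push_cast
      field_simp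
    have hjensen := (strictConcaveOn_log_Ioi.concaveOn).le_map_sum hw hw1 hxpos
    have hsum_eq : ∑ j ∈ t, ((K : ℝ) + 1)⁻¹ • ((∑ k ∈ t.erase j, w k ω) / K)
        = (∑ k ∈ Finset.range (K + 1), w k ω) / (K + 1) := by
      have herase : ∀ j ∈ t, ∑ k ∈ t.erase j, w k ω = (∑ k ∈ t, w k ω) - w j ω := by
        intro j hjt
        rw [Finset.sum_erase_eq_sub hjt]
      rw [Finset.sum_congr rfl fun j hjt => by rw [smul_eq_mul, herase j hjt]]
      rw [← Finset.mul_sum]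
      have : ∑ j ∈ t, ((∑ k ∈ t, w k ω) - w j ω) / K
          = ((K + 1 : ℝ) * (∑ k ∈ t, w k ω) - (∑ k ∈ t, w k ω)) / K := by
        rw [← Finset.sum_div, Finset.sum_sub_distrib, Finset.sum_const, ht, Finset.card_range,
          nsmul_eq_mul]
        push_cast
        ring_nf
      rw [this, ht]
      field_simp
      ring
    calc ∑ j ∈ t, ((K : ℝ) + 1)⁻¹ * g j ω
        = ∑ j ∈ t, ((K : ℝ) + 1)⁻¹ • Real.log ((∑ k ∈ t.erase j, w k ω) / K) := by
          simp [hg, smul_eq_mul]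
      _ ≤ Real.log (∑ j ∈ t, ((K : ℝ) + 1)⁻¹ • ((∑ k ∈ t.erase j, w k ω) / K)) := hjensen
      _ = Real.log ((∑ k ∈ Finset.range (K + 1), w k ω) / (K + 1)) := by rw [hsum_eq]
  -- integrate the pointwise inequality
  have hint_lhs : Integrable (fun ω => ∑ j ∈ t, ((K : ℝ) + 1)⁻¹ * g j ω) P :=
    integrable_finset_sum t fun j hjt => ((hg_int j hjt).const_mul _)
  have hint_rhs := hlogint (K + 1) (by omega)
  have hint_rhs' : Integrable
      (fun ω => Real.log ((∑ k ∈ Finset.range (K + 1), w k ω) / (K + 1))) P := by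
    have hc : ((K + 1 : ℕ) : ℝ) = (K : ℝ) + 1 := by push_cast; ring
    rw [show (fun ω => Real.log ((∑ k ∈ Finset.range (K + 1), w k ω) / ((K : ℝ) + 1)))
        = (fun ω => Real.log ((∑ k ∈ Finset.range (K + 1), w k ω) / ((K + 1 : ℕ) : ℝ)))
      from by funext ω; rw [hc]]
    exact hint_rhs
  have hmono := integral_mono_ae hint_lhs hint_rhs' hae
  have hlhs_eq : ∫ ω, ∑ j ∈ t, ((K : ℝ) + 1)⁻¹ * g j ω ∂P
      = ∫ ω, Real.log ((∑ k ∈ Finset.range K, w k ω) / K) ∂P := by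
    rw [integral_finset_sum t fun j hjt => ((hg_int j hjt).const_mul _)]
    have : ∀ j ∈ t, ∫ ω, ((K : ℝ) + 1)⁻¹ * g j ω ∂P
        = ((K : ℝ) + 1)⁻¹ * ∫ ω, Real.log ((∑ k ∈ Finset.range K, w k ω) / K) ∂P := by
      intro j hjt
      rw [integral_const_mul, hg_eq j hjt]
    rw [Finset.sum_congr rfl this, Finset.sum_const, ht, Finset.card_range, nsmul_eq_mul]
    push_cast
    field_simp
  rw [hlhs_eq] at hmono
  exact hmono
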